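/- Completeness of NS(V): if a nested sequent Γ ⊢ Δ is valid (its formula interpretation ι(Γ ⊢ Δ) holds at every precisification of every standpoint model over V), then Γ ⊢ Δ is derivable in the nested sequent calculus NS(V). -/

import Mathlib

/-- Formulas of propositional standpoint logic in negation normal form,
over propositional variables `P` and standpoint symbols `S`. -/
inductive Fml (P S : Type) : Type
  | atom  : P → Fml P S
  | natom : P → Fml P S
  | or    : Fml P S → Fml P S → Fml P S
  | and   : Fml P S → Fml P S → Fml P S
  | box   : S → Fml P S → Fml P S
  | dia   : S → Fml P S → Fml P S

/-- A standpoint model over the vocabulary `(P, S)` with distinguished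
universal standpoint `star`, whose set of precisifications is `W`. -/
structure Model (P S : Type) (star : S) (W : Type) : Type where
  nonempty : Nonempty W
  sig : S → Set W
  val : P → Set W
  sig_nonempty : ∀ s, (sig s).Nonempty
  sig_star : sig star = Set.univ

/-- Satisfaction of a formula at a precisification of a standpoint model. -/
def sat {P S W : Type} {star : S} (M : Model P S star W) : W → Fml P S → Prop
  | w, .atom p  => w ∈ M.val p
  | w, .natom p => w ∉ M.val p
  | w, .or φ ψ  => sat M w φ ∨ sat M w ψ
  | w, .and φ ψ => sat M w φ ∧ sat M w ψ
  | _, .box s φ => ∀ v ∈ M.sig s, sat M v φ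
  | _, .dia s φ => ∃ v ∈ M.sig s, sat M v φ

/-- `M` satisfies every sharpening statement `s ≼ s'` in `Γ`
(this does not depend on the precisification). -/
def satSharp {P S W : Type} {star : S} (M : Model P S star W) (Γ : Set (S × S)) : Prop :=
  ∀ q ∈ Γ, M.sig q.1 ⊆ M.sig q.2

/-- `SpRel star Γ s s'` is `s ≼*_Γ s'`: the least reflexive-transitive relation
containing all pairs of `Γ` and relating every standpoint to `star`. -/
inductive SpRel {S : Type} (star : S) (Γ : Set (S × S)) : S → S → Prop
  | base {s s'} : (s, s') ∈ Γ → SpRel star Γ s s'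
  | toStar (s) : SpRel star Γ s star
  | refl (s) : SpRel star Γ s s
  | trans {s t u} : SpRel star Γ s t → SpRel star Γ t u → SpRel star Γ s u

/-- Satisfaction at `w` of the formula interpretation
`ι(Γ ⊢ Σ₀, (s₁)[Σ₁], …, (sₙ)[Σₙ]) = ⋀Γ → ⋁Σ₀ ∨ ⋁ᵢ ◻_{sᵢ}(⋁Σᵢ)`
of the nested sequent with antecedent `Γ`, root component `root = Σ₀`
and nestings `nest = [(s₁, Σ₁), …, (sₙ, Σₙ)]`. -/
def satSeq {P S W : Type} {star : S} (M : Model P S star W) (w : W)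
    (Γ : Set (S × S)) (root : Multiset (Fml P S))
    (nest : List (S × Multiset (Fml P S))) : Prop :=
  satSharp M Γ →
    (∃ φ ∈ root, sat M w φ) ∨ ∃ e ∈ nest, ∀ v ∈ M.sig e.1, ∃ φ ∈ e.2, sat M v φ

/-- Validity of a nested sequent: its formula interpretation holds at every
precisification of every standpoint model. -/
def ValidSeq {P S : Type} (star : S) (Γ : Set (S × S))
    (root : Multiset (Fml P S)) (nest : List (S × Multiset (Fml P S))) : Prop :=
  ∀ (W : Type) (M : Model P S star W) (w : W), satSeq M w Γ root nest

/-- Derivability in the nested sequent calculus `NS(V)`, for sequents with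
antecedent `Γ`, root component `root` and nestings `nest`.  The constructors
are the rules of `NS(V)` read bottom-up (premises above, conclusion below). -/
inductive Deriv {P S : Type} (star : S) (Γ : Set (S × S)) :
    Multiset (Fml P S) → List (S × Multiset (Fml P S)) → Prop
  /-- `(id)`: some component contains both `p` and `¬p`. -/
  | id {root nest} (p : P) :
      ((Fml.atom p ∈ root ∧ Fml.natom p ∈ root) ∨
        ∃ e ∈ nest, Fml.atom p ∈ e.2 ∧ Fml.natom p ∈ e.2) →
      Deriv star Γ root nest
  /-- `(∨)`, principal formula in the root component. -/
  | orRoot {root nest} {φ ψ : Fml P S} : Fml.or φ ψ ∈ root →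
      Deriv star Γ (φ ::ₘ ψ ::ₘ root) nest → Deriv star Γ root nest
  /-- `(∨)`, principal formula in a nesting. -/
  | orNest {root l₁ l₂ s Θ} {φ ψ : Fml P S} : Fml.or φ ψ ∈ Θ →
      Deriv star Γ root (l₁ ++ (s, φ ::ₘ ψ ::ₘ Θ) :: l₂) →
      Deriv star Γ root (l₁ ++ (s, Θ) :: l₂)
  /-- `(∧)`, principal formula in the root component. -/
  | andRoot {root nest} {φ ψ : Fml P S} : Fml.and φ ψ ∈ root →
      Deriv star Γ (φ ::ₘ root) nest → Deriv star Γ (ψ ::ₘ root) nest →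
      Deriv star Γ root nest
  /-- `(∧)`, principal formula in a nesting. -/
  | andNest {root l₁ l₂ s Θ} {φ ψ : Fml P S} : Fml.and φ ψ ∈ Θ →
      Deriv star Γ root (l₁ ++ (s, φ ::ₘ Θ) :: l₂) →
      Deriv star Γ root (l₁ ++ (s, ψ ::ₘ Θ) :: l₂) →
      Deriv star Γ root (l₁ ++ (s, Θ) :: l₂)
  /-- `(◻ₛ)`: append a fresh nesting `(s)[φ]` for a principal `◻ₛφ`. -/
  | box {root nest s} {φ : Fml P S} :
      (Fml.box s φ ∈ root ∨ ∃ e ∈ nest, Fml.box s φ ∈ e.2) →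
      Deriv star Γ root (nest ++ [(s, ({φ} : Multiset (Fml P S)))]) →
      Deriv star Γ root nest
  /-- `(nₛ)`: append a fresh empty nesting `(s)[∅]`. -/
  | nrule {root nest} (s : S) :
      Deriv star Γ root (nest ++ [(s, (∅ : Multiset (Fml P S)))]) →
      Deriv star Γ root nest
  /-- `(◇ₛ¹)`: `◇ₛφ` principal in a component of `Δ`, `s' ≼*_Γ s`,
  and `φ` is added to the displayed nesting `(s')[Θ]`. -/
  | dia1 {root l₁ l₂ s s' Θ} {φ : Fml P S} : SpRel star Γ s' s →
      (Fml.dia s φ ∈ root ∨ ∃ e ∈ l₁ ++ l₂, Fml.dia s φ ∈ e.2) →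
      Deriv star Γ root (l₁ ++ (s', φ ::ₘ Θ) :: l₂) →
      Deriv star Γ root (l₁ ++ (s', Θ) :: l₂)
  /-- `(◇ₛ²)`: `◇ₛφ` principal inside the nesting `(s')[◇ₛφ, Θ]`, `s' ≼*_Γ s`. -/
  | dia2 {root l₁ l₂ s s' Θ} {φ : Fml P S} : SpRel star Γ s' s →
      Deriv star Γ root (l₁ ++ (s', Fml.dia s φ ::ₘ φ ::ₘ Θ) :: l₂) →
      Deriv star Γ root (l₁ ++ (s', Fml.dia s φ ::ₘ Θ) :: l₂)
  /-- `(◇*)`: `◇*φ` principal in some component, `φ` is added to the root. -/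
  | diaStar {root nest} {φ : Fml P S} :
      (Fml.dia star φ ∈ root ∨ ∃ e ∈ nest, Fml.dia star φ ∈ e.2) →
      Deriv star Γ (φ ::ₘ root) nest → Deriv star Γ root nest

namespace Stmt9Aux

open Classical
attribute [local instance] Classical.propDecidable

variable {P S : Type}

/-- Refutability of a nested sequent. -/
def Refut (star : S) (Γ : Set (S × S)) (root : Multiset (Fml P S))
    (nest : List (S × Multiset (Fml P S))) : Prop :=
  ∃ (W : Type) (M : Model P S star W) (w : W), ¬ satSeq M w Γ root nest

/-- Componentwise extension of nestings. -/
def Ext (n1 n2 : List (S × Multiset (Fml P S))) : Prop :=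
  ∀ e ∈ n1, ∃ e' ∈ n2, e.1 = e'.1 ∧ ∀ φ ∈ e.2, φ ∈ e'.2

lemma Ext.refl (n : List (S × Multiset (Fml P S))) : Ext n n :=
  fun e he => ⟨e, he, rfl, fun _ h => h⟩

lemma satSeq_mono {W : Type} {star : S} {M : Model P S star W} {w : W} {Γ : Set (S × S)}
    {r1 r2 : Multiset (Fml P S)} {n1 n2 : List (S × Multiset (Fml P S))}
    (hr : ∀ φ ∈ r1, φ ∈ r2) (hn : Ext n1 n2) :
    satSeq M w Γ r1 n1 → satSeq M w Γ r2 n2 := by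
  intro h hsh
  rcases h hsh with ⟨φ, hφ, hs⟩ | ⟨e, he, hall⟩
  · exact Or.inl ⟨φ, hr φ hφ, hs⟩
  · obtain ⟨e', he', hlab, hsub⟩ := hn e he
    refine Or.inr ⟨e', he', fun v hv => ?_⟩
    obtain ⟨φ, hφ, hs⟩ := hall v (by rw [hlab]; exact hv)
    exact ⟨φ, hsub φ hφ, hs⟩

lemma Refut_mono {star : S} {Γ : Set (S × S)} {r1 r2 : Multiset (Fml P S)}
    {n1 n2 : List (S × Multiset (Fml P S))}
    (hr : ∀ φ ∈ r1, φ ∈ r2) (hn : Ext n1 n2) :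
    Refut star Γ r2 n2 → Refut star Γ r1 n1 := by
  rintro ⟨W, M, w, h⟩
  exact ⟨W, M, w, fun hs => h (satSeq_mono hr hn hs)⟩

/-! ### Subformula closure -/

noncomputable def scl : Fml P S → Finset (Fml P S)
  | .atom p => {.atom p}
  | .natom p => {.natom p}
  | .or φ ψ => insert (.or φ ψ) (scl φ ∪ scl ψ)
  | .and φ ψ => insert (.and φ ψ) (scl φ ∪ scl ψ)
  | .box s φ => insert (.box s φ) (scl φ)
  | .dia s φ => insert (.dia s φ) (scl φ)

lemma mem_scl_self (φ : Fml P S) : φ ∈ scl φ := by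
  cases φ <;> simp [scl]

lemma scl_trans : ∀ {φ ψ : Fml P S}, ψ ∈ scl φ → scl ψ ⊆ scl φ := by
  intro φ
  induction φ with
  | atom p => intro ψ h; simp [scl] at h; subst h; exact subset_rfl
  | natom p => intro ψ h; simp [scl] at h; subst h; exact subset_rfl
  | or a b iha ihb =>
      intro ψ h
      simp only [scl, Finset.mem_insert, Finset.mem_union] at h
      rcases h with h | h | h
      · subst h; exact subset_rfl
      · exact (iha h).trans ((Finset.subset_union_left).trans (Finset.subset_insert _ _))
      · exact (ihb h).trans ((Finset.subset_union_right).trans (Finset.subset_insert _ _))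
  | and a b iha ihb =>
      intro ψ h
      simp only [scl, Finset.mem_insert, Finset.mem_union] at h
      rcases h with h | h | h
      · subst h; exact subset_rfl
      · exact (iha h).trans ((Finset.subset_union_left).trans (Finset.subset_insert _ _))
      · exact (ihb h).trans ((Finset.subset_union_right).trans (Finset.subset_insert _ _))
  | box s a iha =>
      intro ψ h
      simp only [scl, Finset.mem_insert] at h
      rcases h with h | h
      · subst h; exact subset_rfl
      · exact (iha h).trans (Finset.subset_insert _ _)
  | dia s a iha =>
      intro ψ h
      simp only [scl, Finset.mem_insert] at h
      rcases h with h | h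
      · subst h; exact subset_rfl
      · exact (iha h).trans (Finset.subset_insert _ _)

/-- A finset closed under subformulas. -/
def Closed (F : Finset (Fml P S)) : Prop := ∀ ψ ∈ F, ∀ χ ∈ scl ψ, χ ∈ F

lemma Closed.or_left {F : Finset (Fml P S)} (hF : Closed F) {φ ψ : Fml P S}
    (h : Fml.or φ ψ ∈ F) : φ ∈ F :=
  hF _ h _ (by simp [scl, mem_scl_self])

lemma Closed.or_right {F : Finset (Fml P S)} (hF : Closed F) {φ ψ : Fml P S}
    (h : Fml.or φ ψ ∈ F) : ψ ∈ F :=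
  hF _ h _ (by simp [scl, mem_scl_self])

lemma Closed.and_left {F : Finset (Fml P S)} (hF : Closed F) {φ ψ : Fml P S}
    (h : Fml.and φ ψ ∈ F) : φ ∈ F :=
  hF _ h _ (by simp [scl, mem_scl_self])

lemma Closed.and_right {F : Finset (Fml P S)} (hF : Closed F) {φ ψ : Fml P S}
    (h : Fml.and φ ψ ∈ F) : ψ ∈ F :=
  hF _ h _ (by simp [scl, mem_scl_self])

lemma Closed.box_sub {F : Finset (Fml P S)} (hF : Closed F) {s : S} {φ : Fml P S}
    (h : Fml.box s φ ∈ F) : φ ∈ F :=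
  hF _ h _ (by simp [scl, mem_scl_self])

lemma Closed.dia_sub {F : Finset (Fml P S)} (hF : Closed F) {s : S} {φ : Fml P S}
    (h : Fml.dia s φ ∈ F) : φ ∈ F :=
  hF _ h _ (by simp [scl, mem_scl_self])

end Stmt9Aux
namespace Stmt9Aux

open Classical
attribute [local instance] Classical.propDecidable

variable {P S : Type}

/-! ### The measure -/

noncomputable def pot (F : Finset (Fml P S)) (Θ : Multiset (Fml P S)) : ℕ :=
  (F.filter (fun φ => φ ∉ Θ)).card

lemma pot_le (F : Finset (Fml P S)) (Θ : Multiset (Fml P S)) : pot F Θ ≤ F.card :=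
  Finset.card_filter_le _ _

lemma pot_lt {F : Finset (Fml P S)} {Θ Θ' : Multiset (Fml P S)} {φ : Fml P S}
    (hφF : φ ∈ F) (hφ : φ ∉ Θ) (hsub : ∀ ψ ∈ Θ, ψ ∈ Θ') (hφ' : φ ∈ Θ') :
    pot F Θ' < pot F Θ := by
  apply Finset.card_lt_card
  refine (Finset.ssubset_iff_of_subset ?_).2 ⟨φ, ?_, ?_⟩
  · intro χ hχ
    simp only [Finset.mem_filter] at hχ ⊢
    exact ⟨hχ.1, fun hmem => hχ.2 (hsub χ hmem)⟩
  · simp only [Finset.mem_filter]; exact ⟨hφF, hφ⟩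
  · simp only [Finset.mem_filter, not_and, not_not]; intro _; exact hφ'

def bp : Fml P S → Finset (S × Fml P S)
  | .box s φ => {(s, φ)}
  | _ => ∅

noncomputable def boxPairs (F : Finset (Fml P S)) : Finset (S × Fml P S) :=
  F.biUnion bp

lemma mem_boxPairs {F : Finset (Fml P S)} {s : S} {φ : Fml P S}
    (h : Fml.box s φ ∈ F) : (s, φ) ∈ boxPairs F :=
  Finset.mem_biUnion.2 ⟨_, h, by simp [bp]⟩

noncomputable def missB (F : Finset (Fml P S)) (nest : List (S × Multiset (Fml P S))) :
    Finset (S × Fml P S) :=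
  (boxPairs F).filter (fun q => ¬ ∃ e ∈ nest, e.1 = q.1 ∧ q.2 ∈ e.2)

noncomputable def missN [Fintype S] (nest : List (S × Multiset (Fml P S))) : Finset S :=
  Finset.univ.filter (fun s => ¬ ∃ e ∈ nest, e.1 = s)

lemma missB_mono {F : Finset (Fml P S)} {n1 n2 : List (S × Multiset (Fml P S))}
    (h : Ext n1 n2) : missB F n2 ⊆ missB F n1 := by
  intro q hq
  simp only [missB, Finset.mem_filter] at hq ⊢
  refine ⟨hq.1, fun ⟨e, he, hl, hm⟩ => hq.2 ?_⟩
  obtain ⟨e', he', hl', hs⟩ := h e he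
  exact ⟨e', he', hl' ▸ hl, hs _ hm⟩

lemma missN_mono [Fintype S] {n1 n2 : List (S × Multiset (Fml P S))}
    (h : Ext n1 n2) : missN n2 ⊆ missN n1 := by
  intro s hs
  simp only [missN, Finset.mem_filter] at hs ⊢
  refine ⟨hs.1, fun ⟨e, he, hl⟩ => hs.2 ?_⟩
  obtain ⟨e', he', hl', _⟩ := h e he
  exact ⟨e', he', hl' ▸ hl⟩

noncomputable def mu [Fintype S] (F : Finset (Fml P S)) (root : Multiset (Fml P S))
    (nest : List (S × Multiset (Fml P S))) : ℕ :=
  (F.card + 1) * ((missB F nest).card + (missN nest).card)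
    + pot F root + (nest.map (fun e => pot F e.2)).sum

lemma Ext.insert_mid {l₁ l₂ : List (S × Multiset (Fml P S))} {s : S}
    {Θ Θ' : Multiset (Fml P S)} (hsub : ∀ ψ ∈ Θ, ψ ∈ Θ') :
    Ext (l₁ ++ (s, Θ) :: l₂) (l₁ ++ (s, Θ') :: l₂) := by
  intro e he
  rcases List.mem_append.1 he with h | h
  · exact ⟨e, List.mem_append_left _ h, rfl, fun _ h => h⟩
  · rcases List.mem_cons.1 h with h | h
    · subst h; exact ⟨(s, Θ'), List.mem_append_right _ List.mem_cons_self, rfl, hsub⟩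
    · exact ⟨e, List.mem_append_right _ (List.mem_cons_of_mem _ h), rfl, fun _ h => h⟩

lemma Ext.append (n : List (S × Multiset (Fml P S))) (l : List (S × Multiset (Fml P S))) :
    Ext n (n ++ l) :=
  fun e he => ⟨e, List.mem_append_left _ he, rfl, fun _ h => h⟩

lemma mu_root_lt [Fintype S] {F : Finset (Fml P S)} {root root' : Multiset (Fml P S)}
    {nest : List (S × Multiset (Fml P S))} (hlt : pot F root' < pot F root) :
    mu F root' nest < mu F root nest := by
  simp only [mu]; omega

lemma mu_nest_lt [Fintype S] {F : Finset (Fml P S)} {root : Multiset (Fml P S)}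
    {l₁ l₂ : List (S × Multiset (Fml P S))} {s : S} {Θ Θ' : Multiset (Fml P S)}
    (hsub : ∀ ψ ∈ Θ, ψ ∈ Θ') (hlt : pot F Θ' < pot F Θ) :
    mu F root (l₁ ++ (s, Θ') :: l₂) < mu F root (l₁ ++ (s, Θ) :: l₂) := by
  have hext : Ext (l₁ ++ (s, Θ) :: l₂) (l₁ ++ (s, Θ') :: l₂) := Ext.insert_mid hsub
  have h1 : (missB F (l₁ ++ (s, Θ') :: l₂)).card ≤ (missB F (l₁ ++ (s, Θ) :: l₂)).card :=
    Finset.card_le_card (missB_mono hext)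
  have h2 : (missN (l₁ ++ (s, Θ') :: l₂)).card ≤ (missN (l₁ ++ (s, Θ) :: l₂)).card :=
    Finset.card_le_card (missN_mono hext)
  have h3 : (F.card + 1) * ((missB F (l₁ ++ (s, Θ') :: l₂)).card + (missN (l₁ ++ (s, Θ') :: l₂)).card)
      ≤ (F.card + 1) * ((missB F (l₁ ++ (s, Θ) :: l₂)).card + (missN (l₁ ++ (s, Θ) :: l₂)).card) :=
    Nat.mul_le_mul_left _ (by omega)
  simp only [mu, List.map_append, List.map_cons, List.sum_append, List.sum_cons] at *
  omega

lemma mu_append_lt [Fintype S] {F : Finset (Fml P S)} {root : Multiset (Fml P S)}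
    {nest : List (S × Multiset (Fml P S))} {s : S} {Θ : Multiset (Fml P S)}
    (hmiss : (missB F (nest ++ [(s, Θ)])).card + (missN (nest ++ [(s, Θ)])).card
      < (missB F nest).card + (missN nest).card) :
    mu F root (nest ++ [(s, Θ)]) < mu F root nest := by
  have h3 : (F.card + 1) * ((missB F (nest ++ [(s, Θ)])).card + (missN (nest ++ [(s, Θ)])).card) + (F.card + 1)
      ≤ (F.card + 1) * ((missB F nest).card + (missN nest).card) := by
    have := Nat.mul_le_mul_left (F.card + 1) (Nat.succ_le_of_lt hmiss)
    simpa [Nat.mul_succ] using this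
  have h4 : pot F Θ ≤ F.card := pot_le F Θ
  simp only [mu, List.map_append, List.map_cons, List.sum_append, List.sum_cons,
    List.map_nil, List.sum_nil]
  omega

lemma mu_box_lt [Fintype S] {F : Finset (Fml P S)} {root : Multiset (Fml P S)}
    {nest : List (S × Multiset (Fml P S))} {s : S} {φ : Fml P S}
    (hq : (s, φ) ∈ missB F nest) :
    mu F root (nest ++ [(s, ({φ} : Multiset (Fml P S)))]) < mu F root nest := by
  apply mu_append_lt
  have hB : missB F (nest ++ [(s, ({φ} : Multiset (Fml P S)))]) ⊂ missB F nest := by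
    refine (Finset.ssubset_iff_of_subset (missB_mono (Ext.append _ _))).2 ⟨(s, φ), hq, ?_⟩
    simp only [missB, Finset.mem_filter, not_and, not_not]
    intro _
    exact ⟨(s, ({φ} : Multiset (Fml P S))), List.mem_append_right _ List.mem_cons_self,
      rfl, Multiset.mem_singleton_self φ⟩
  have h1 := Finset.card_lt_card hB
  have h2 := Finset.card_le_card (missN_mono (Ext.append nest [(s, ({φ} : Multiset (Fml P S)))]))
  omega

lemma mu_n_lt [Fintype S] {F : Finset (Fml P S)} {root : Multiset (Fml P S)}
    {nest : List (S × Multiset (Fml P S))} {s : S}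
    (hq : s ∈ missN nest) :
    mu F root (nest ++ [(s, (∅ : Multiset (Fml P S)))]) < mu F root nest := by
  apply mu_append_lt
  have hN : missN (nest ++ [(s, (∅ : Multiset (Fml P S)))]) ⊂ missN nest := by
    refine (Finset.ssubset_iff_of_subset (missN_mono (Ext.append _ _))).2 ⟨s, hq, ?_⟩
    simp only [missN, Finset.mem_filter, not_and, not_not]
    intro _
    exact ⟨(s, (∅ : Multiset (Fml P S))), List.mem_append_right _ List.mem_cons_self, rfl⟩
  have h1 := Finset.card_lt_card hN
  have h2 := Finset.card_le_card (missB_mono (F := F) (Ext.append nest [(s, (∅ : Multiset (Fml P S)))]))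
  omega

end Stmt9Aux
namespace Stmt9Aux

open Classical
attribute [local instance] Classical.propDecidable

variable {P S : Type}

/-- Membership of a formula in the component of a sequent indexed by `w`. -/
def cmp (root : Multiset (Fml P S)) (nest : List (S × Multiset (Fml P S))) :
    Option (Fin nest.length) → Fml P S → Prop
  | none, φ => φ ∈ root
  | some i, φ => φ ∈ (nest.get i).2

lemma countermodel (star : S) (Γ : Set (S × S)) (hΓ : ∀ q ∈ Γ, q.1 ≠ star)
    (root : Multiset (Fml P S)) (nest : List (S × Multiset (Fml P S)))
    (hid : ∀ w (p : P), ¬(cmp root nest w (.atom p) ∧ cmp root nest w (.natom p)))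
    (hor : ∀ w (φ ψ : Fml P S), cmp root nest w (.or φ ψ) →
      cmp root nest w φ ∧ cmp root nest w ψ)
    (hand : ∀ w (φ ψ : Fml P S), cmp root nest w (.and φ ψ) →
      cmp root nest w φ ∨ cmp root nest w ψ)
    (hbox : ∀ w (s : S) (φ : Fml P S), cmp root nest w (.box s φ) →
      ∃ i : Fin nest.length, (nest.get i).1 = s ∧ φ ∈ (nest.get i).2)
    (hn : ∀ s : S, ∃ i : Fin nest.length, (nest.get i).1 = s)
    (hdia : ∀ w (s : S) (φ : Fml P S), cmp root nest w (.dia s φ) →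
      ∀ i : Fin nest.length, SpRel star Γ (nest.get i).1 s → φ ∈ (nest.get i).2)
    (hdiastar : ∀ w (φ : Fml P S), cmp root nest w (.dia star φ) → φ ∈ root) :
    Refut star Γ root nest := by
  set W := Option (Fin nest.length) with hW
  let M : Model P S star W :=
    { nonempty := ⟨none⟩
      sig := fun s => if s = star then Set.univ
        else {w | ∃ i : Fin nest.length, w = some i ∧ SpRel star Γ (nest.get i).1 s}
      val := fun p => {w | ¬ cmp root nest w (.atom p)}
      sig_nonempty := by
        intro s
        by_cases h : s = star
        · exact ⟨none, by simp [h]⟩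
        · obtain ⟨i, hi⟩ := hn s
          refine ⟨some i, ?_⟩
          simp only [if_neg h, Set.mem_setOf_eq]
          exact ⟨i, rfl, by rw [hi]; exact SpRel.refl s⟩
      sig_star := if_pos rfl }
  have hsig_some : ∀ (i : Fin nest.length) (s : S),
      SpRel star Γ (nest.get i).1 s → (some i : W) ∈ M.sig s := by
    intro i s hrel
    by_cases h : s = star
    · simp only [M, if_pos h]; trivial
    · simp only [M, if_neg h, Set.mem_setOf_eq]
      exact ⟨i, rfl, hrel⟩
  have hsig_elim : ∀ (v : W) (s : S), v ∈ M.sig s →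
      (s = star) ∨ ∃ i : Fin nest.length, v = some i ∧ SpRel star Γ (nest.get i).1 s := by
    intro v s hv
    by_cases h : s = star
    · exact Or.inl h
    · simp only [M, if_neg h, Set.mem_setOf_eq] at hv
      exact Or.inr hv
  have truth : ∀ (φ : Fml P S) (w : W), cmp root nest w φ → ¬ sat M w φ := by
    intro φ
    induction φ with
    | atom p =>
        intro w h hs
        exact hs h
    | natom p =>
        intro w h hs
        exact hs (fun hc => hid w p ⟨hc, h⟩)
    | or a b iha ihb =>
        intro w h hs
        obtain ⟨ha, hb⟩ := hor w a b h
        rcases hs with hs | hs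
        · exact iha w ha hs
        · exact ihb w hb hs
    | and a b iha ihb =>
        intro w h hs
        rcases hand w a b h with hc | hc
        · exact iha w hc hs.1
        · exact ihb w hc hs.2
    | box s a iha =>
        intro w h hs
        obtain ⟨i, hlab, hmem⟩ := hbox w s a h
        have hin : (some i : W) ∈ M.sig s := hsig_some i s (by rw [hlab]; exact SpRel.refl s)
        exact iha (some i) hmem (hs (some i) hin)
    | dia s a iha =>
        intro w h hs
        obtain ⟨v, hv, hsv⟩ := hs
        rcases hsig_elim v s hv with hstar | ⟨i, rfl, hrel⟩
        · cases v with
          | none => exact iha none (hdiastar w a (hstar ▸ h)) hsv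
          | some i =>
              exact iha (some i) (hdia w s a h i (by rw [hstar]; exact SpRel.toStar _)) hsv
        · exact iha (some i) (hdia w s a h i hrel) hsv
  refine ⟨W, M, none, fun hs => ?_⟩
  have hsharp : satSharp M Γ := by
    intro q hq v hv
    by_cases h2 : q.2 = star
    · simp only [M, if_pos h2]; trivial
    · rcases hsig_elim v q.1 hv with h1 | ⟨i, rfl, hrel⟩
      · exact absurd h1 (hΓ q hq)
      · exact hsig_some i q.2 (SpRel.trans hrel (SpRel.base hq))
  rcases hs hsharp with ⟨φ, hφ, hsat⟩ | ⟨e, he, hall⟩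
  · exact truth φ none hφ hsat
  · obtain ⟨i, hi⟩ := List.mem_iff_get.1 he
    have hin : (some i : W) ∈ M.sig e.1 := hsig_some i e.1 (by rw [hi]; exact SpRel.refl _)
    obtain ⟨φ, hφ, hsat⟩ := hall (some i) hin
    refine truth φ (some i) ?_ hsat
    show φ ∈ (nest.get i).2
    rw [hi]; exact hφ

end Stmt9Aux
namespace Stmt9Aux

open Classical
attribute [local instance] Classical.propDecidable

variable {P S : Type}

lemma memF_cons {F : Finset (Fml P S)} {root : Multiset (Fml P S)} {φ : Fml P S}
    (hφ : φ ∈ F) (h : ∀ χ ∈ root, χ ∈ F) : ∀ χ ∈ φ ::ₘ root, χ ∈ F := by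
  intro χ hχ
  rcases Multiset.mem_cons.1 hχ with rfl | hχ
  · exact hφ
  · exact h _ hχ

lemma nestF_mid {F : Finset (Fml P S)} {l₁ l₂ : List (S × Multiset (Fml P S))}
    {s : S} {Θ Θ' : Multiset (Fml P S)}
    (h : ∀ e ∈ l₁ ++ (s, Θ) :: l₂, ∀ φ ∈ e.2, φ ∈ F) (h' : ∀ φ ∈ Θ', φ ∈ F) :
    ∀ e ∈ l₁ ++ (s, Θ') :: l₂, ∀ φ ∈ e.2, φ ∈ F := by
  intro e he
  rcases List.mem_append.1 he with h1 | h1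
  · exact h e (List.mem_append_left _ h1)
  · rcases List.mem_cons.1 h1 with rfl | h1
    · exact h'
    · exact h e (List.mem_append_right _ (List.mem_cons_of_mem _ h1))

lemma nestF_append {F : Finset (Fml P S)} {nest : List (S × Multiset (Fml P S))}
    {s : S} {Θ : Multiset (Fml P S)}
    (h : ∀ e ∈ nest, ∀ φ ∈ e.2, φ ∈ F) (h' : ∀ φ ∈ Θ, φ ∈ F) :
    ∀ e ∈ nest ++ [(s, Θ)], ∀ φ ∈ e.2, φ ∈ F := by
  intro e he
  rcases List.mem_append.1 he with h1 | h1
  · exact h e h1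
  · rcases List.mem_cons.1 h1 with rfl | h1
    · exact h'
    · cases h1

lemma mem_map_sum {l : List (S × Multiset (Fml P S))} {e : S × Multiset (Fml P S)}
    (he : e ∈ l) : ∀ φ ∈ e.2, φ ∈ (l.map Prod.snd).sum := by
  induction l with
  | nil => cases he
  | cons a l ih =>
      intro φ hφ
      simp only [List.map_cons, List.sum_cons, Multiset.mem_add]
      rcases List.mem_cons.1 he with rfl | h
      · exact Or.inl hφ
      · exact Or.inr (ih h φ hφ)

lemma main [Fintype S] (star : S) (Γ : Set (S × S)) (hΓ : ∀ q ∈ Γ, q.1 ≠ star)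
    (F : Finset (Fml P S)) (hF : Closed F) :
    ∀ (n : ℕ) (root : Multiset (Fml P S)) (nest : List (S × Multiset (Fml P S))),
      mu F root nest = n → (∀ φ ∈ root, φ ∈ F) → (∀ e ∈ nest, ∀ φ ∈ e.2, φ ∈ F) →
      ¬ Deriv star Γ root nest → Refut star Γ root nest := by
  intro n
  induction n using Nat.strong_induction_on with
  | _ n IH =>
  intro root nest hmu hrF hnF hnd
  subst hmu
  have inseqF : ∀ {χ : Fml P S}, (χ ∈ root ∨ ∃ e ∈ nest, χ ∈ e.2) → χ ∈ F := by
    rintro χ (h | ⟨e, he, h⟩)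
    · exact hrF _ h
    · exact hnF e he _ h
  by_cases hC1 : ∃ p : P, (Fml.atom p ∈ root ∧ Fml.natom p ∈ root) ∨
      ∃ e ∈ nest, Fml.atom p ∈ e.2 ∧ Fml.natom p ∈ e.2
  · obtain ⟨p, hp⟩ := hC1
    exact absurd (Deriv.id p hp) hnd
  by_cases hC2 : ∃ φ ψ : Fml P S, Fml.or φ ψ ∈ root ∧ ¬(φ ∈ root ∧ ψ ∈ root)
  · obtain ⟨φ, ψ, hmem, hnot⟩ := hC2
    have hφF : φ ∈ F := hF.or_left (hrF _ hmem)
    have hψF : ψ ∈ F := hF.or_right (hrF _ hmem)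
    have hsub : ∀ χ ∈ root, χ ∈ φ ::ₘ ψ ::ₘ root := fun χ h =>
      Multiset.mem_cons_of_mem (Multiset.mem_cons_of_mem h)
    have hlt : pot F (φ ::ₘ ψ ::ₘ root) < pot F root := by
      by_cases hφ : φ ∈ root
      · exact pot_lt hψF (fun h => hnot ⟨hφ, h⟩) hsub
          (Multiset.mem_cons_of_mem (Multiset.mem_cons_self _ _))
      · exact pot_lt hφF hφ hsub (Multiset.mem_cons_self _ _)
    have hnd' : ¬ Deriv star Γ (φ ::ₘ ψ ::ₘ root) nest := fun d => hnd (Deriv.orRoot hmem d)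
    exact Refut_mono hsub (Ext.refl nest)
      (IH _ (mu_root_lt hlt) _ _ rfl (memF_cons hφF (memF_cons hψF hrF)) hnF hnd')
  by_cases hC3 : ∃ e ∈ nest, ∃ φ ψ : Fml P S, Fml.or φ ψ ∈ e.2 ∧ ¬(φ ∈ e.2 ∧ ψ ∈ e.2)
  · obtain ⟨⟨s, Θ⟩, he, φ, ψ, hmem, hnot⟩ := hC3
    obtain ⟨l₁, l₂, rfl⟩ := List.append_of_mem he
    have hoF : Fml.or φ ψ ∈ F := hnF _ he _ hmem
    have hφF : φ ∈ F := hF.or_left hoF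
    have hψF : ψ ∈ F := hF.or_right hoF
    have hsub : ∀ χ ∈ Θ, χ ∈ φ ::ₘ ψ ::ₘ Θ := fun χ h =>
      Multiset.mem_cons_of_mem (Multiset.mem_cons_of_mem h)
    have hlt : pot F (φ ::ₘ ψ ::ₘ Θ) < pot F Θ := by
      by_cases hφ : φ ∈ Θ
      · exact pot_lt hψF (fun h => hnot ⟨hφ, h⟩) hsub
          (Multiset.mem_cons_of_mem (Multiset.mem_cons_self _ _))
      · exact pot_lt hφF hφ hsub (Multiset.mem_cons_self _ _)
    have hnd' : ¬ Deriv star Γ root (l₁ ++ (s, φ ::ₘ ψ ::ₘ Θ) :: l₂) := fun d =>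
      hnd (Deriv.orNest hmem d)
    exact Refut_mono (fun χ h => h) (Ext.insert_mid hsub)
      (IH _ (mu_nest_lt hsub hlt) _ _ rfl hrF
        (nestF_mid hnF (memF_cons hφF (memF_cons hψF (fun χ h => hnF _ he _ h)))) hnd')
  by_cases hC4 : ∃ φ ψ : Fml P S, Fml.and φ ψ ∈ root ∧ φ ∉ root ∧ ψ ∉ root
  · obtain ⟨φ, ψ, hmem, hφ, hψ⟩ := hC4
    have hφF : φ ∈ F := hF.and_left (hrF _ hmem)
    have hψF : ψ ∈ F := hF.and_right (hrF _ hmem)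
    by_cases hd1 : Deriv star Γ (φ ::ₘ root) nest
    · have hnd' : ¬ Deriv star Γ (ψ ::ₘ root) nest := fun d =>
        hnd (Deriv.andRoot hmem hd1 d)
      exact Refut_mono (fun χ h => Multiset.mem_cons_of_mem h) (Ext.refl nest)
        (IH _ (mu_root_lt (pot_lt hψF hψ (fun χ h => Multiset.mem_cons_of_mem h)
          (Multiset.mem_cons_self _ _))) _ _ rfl (memF_cons hψF hrF) hnF hnd')
    · exact Refut_mono (fun χ h => Multiset.mem_cons_of_mem h) (Ext.refl nest)
        (IH _ (mu_root_lt (pot_lt hφF hφ (fun χ h => Multiset.mem_cons_of_mem h)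
          (Multiset.mem_cons_self _ _))) _ _ rfl (memF_cons hφF hrF) hnF hd1)
  by_cases hC5 : ∃ e ∈ nest, ∃ φ ψ : Fml P S, Fml.and φ ψ ∈ e.2 ∧ φ ∉ e.2 ∧ ψ ∉ e.2
  · obtain ⟨⟨s, Θ⟩, he, φ, ψ, hmem, hφ, hψ⟩ := hC5
    obtain ⟨l₁, l₂, rfl⟩ := List.append_of_mem he
    have haF : Fml.and φ ψ ∈ F := hnF _ he _ hmem
    have hφF : φ ∈ F := hF.and_left haF
    have hψF : ψ ∈ F := hF.and_right haF
    by_cases hd1 : Deriv star Γ root (l₁ ++ (s, φ ::ₘ Θ) :: l₂)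
    · have hnd' : ¬ Deriv star Γ root (l₁ ++ (s, ψ ::ₘ Θ) :: l₂) := fun d =>
        hnd (Deriv.andNest hmem hd1 d)
      exact Refut_mono (fun χ h => h)
        (Ext.insert_mid (fun χ h => Multiset.mem_cons_of_mem h))
        (IH _ (mu_nest_lt (fun χ h => Multiset.mem_cons_of_mem h)
            (pot_lt hψF hψ (fun χ h => Multiset.mem_cons_of_mem h)
              (Multiset.mem_cons_self _ _))) _ _ rfl hrF
          (nestF_mid hnF (memF_cons hψF (fun χ h => hnF _ he _ h))) hnd')
    · exact Refut_mono (fun χ h => h)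
        (Ext.insert_mid (fun χ h => Multiset.mem_cons_of_mem h))
        (IH _ (mu_nest_lt (fun χ h => Multiset.mem_cons_of_mem h)
            (pot_lt hφF hφ (fun χ h => Multiset.mem_cons_of_mem h)
              (Multiset.mem_cons_self _ _))) _ _ rfl hrF
          (nestF_mid hnF (memF_cons hφF (fun χ h => hnF _ he _ h))) hd1)
  by_cases hC6 : ∃ (s : S) (φ : Fml P S),
      (Fml.box s φ ∈ root ∨ ∃ e ∈ nest, Fml.box s φ ∈ e.2) ∧
      ¬∃ e ∈ nest, e.1 = s ∧ φ ∈ e.2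
  · obtain ⟨s, φ, hprin, hmiss⟩ := hC6
    have hbF : Fml.box s φ ∈ F := inseqF hprin
    have hφF : φ ∈ F := hF.box_sub hbF
    have hq : (s, φ) ∈ missB F nest := Finset.mem_filter.2 ⟨mem_boxPairs hbF, hmiss⟩
    have hnd' : ¬ Deriv star Γ root (nest ++ [(s, ({φ} : Multiset (Fml P S)))]) := fun d =>
      hnd (Deriv.box hprin d)
    exact Refut_mono (fun χ h => h) (Ext.append nest _)
      (IH _ (mu_box_lt hq) _ _ rfl hrF
        (nestF_append hnF (fun χ h => by rwa [Multiset.mem_singleton.1 h])) hnd')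
  by_cases hC7 : ∃ s : S, ¬∃ e ∈ nest, e.1 = s
  · obtain ⟨s, hmiss⟩ := hC7
    have hq : s ∈ missN nest := Finset.mem_filter.2 ⟨Finset.mem_univ s, hmiss⟩
    have hnd' : ¬ Deriv star Γ root (nest ++ [(s, (∅ : Multiset (Fml P S)))]) := fun d =>
      hnd (Deriv.nrule s d)
    exact Refut_mono (fun χ h => h) (Ext.append nest _)
      (IH _ (mu_n_lt hq) _ _ rfl hrF
        (nestF_append hnF (fun χ h => absurd h (Multiset.notMem_zero χ))) hnd')
  by_cases hC8 : ∃ (s : S) (φ : Fml P S),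
      (Fml.dia s φ ∈ root ∨ ∃ e ∈ nest, Fml.dia s φ ∈ e.2) ∧
      ∃ e' ∈ nest, SpRel star Γ e'.1 s ∧ φ ∉ e'.2
  · obtain ⟨s, φ, hprin, ⟨s', Θ⟩, he', hrel, hφ⟩ := hC8
    have hdF : Fml.dia s φ ∈ F := inseqF hprin
    have hφF : φ ∈ F := hF.dia_sub hdF
    obtain ⟨l₁, l₂, rfl⟩ := List.append_of_mem he'
    by_cases hin : Fml.dia s φ ∈ Θ
    · set Θ₀ := Θ.erase (Fml.dia s φ) with hΘ₀
      have hΘ : Fml.dia s φ ::ₘ Θ₀ = Θ := Multiset.cons_erase hin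
      have hsub : ∀ χ ∈ Θ, χ ∈ Fml.dia s φ ::ₘ φ ::ₘ Θ₀ := by
        intro χ h
        rw [← hΘ] at h
        rcases Multiset.mem_cons.1 h with rfl | h
        · exact Multiset.mem_cons_self _ _
        · exact Multiset.mem_cons_of_mem (Multiset.mem_cons_of_mem h)
      have hnd' : ¬ Deriv star Γ root (l₁ ++ (s', Fml.dia s φ ::ₘ φ ::ₘ Θ₀) :: l₂) := by
        intro d
        apply hnd
        have := Deriv.dia2 hrel d
        rwa [hΘ] at this
      exact Refut_mono (fun χ h => h) (Ext.insert_mid hsub)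
        (IH _ (mu_nest_lt hsub
            (pot_lt hφF hφ hsub (Multiset.mem_cons_of_mem (Multiset.mem_cons_self _ _))))
          _ _ rfl hrF
          (nestF_mid hnF (memF_cons hdF (memF_cons hφF
            (fun χ h => hnF _ he' _ (Multiset.mem_of_mem_erase h))))) hnd')
    · have hexp : Fml.dia s φ ∈ root ∨ ∃ e ∈ l₁ ++ l₂, Fml.dia s φ ∈ e.2 := by
        rcases hprin with h | ⟨e, he, hm⟩
        · exact Or.inl h
        · rcases List.mem_append.1 he with h1 | h1
          · exact Or.inr ⟨e, List.mem_append_left _ h1, hm⟩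
          · rcases List.mem_cons.1 h1 with rfl | h1
            · exact absurd hm hin
            · exact Or.inr ⟨e, List.mem_append_right _ h1, hm⟩
      have hnd' : ¬ Deriv star Γ root (l₁ ++ (s', φ ::ₘ Θ) :: l₂) := fun d =>
        hnd (Deriv.dia1 hrel hexp d)
      exact Refut_mono (fun χ h => h)
        (Ext.insert_mid (fun χ h => Multiset.mem_cons_of_mem h))
        (IH _ (mu_nest_lt (fun χ h => Multiset.mem_cons_of_mem h)
            (pot_lt hφF hφ (fun χ h => Multiset.mem_cons_of_mem h)
              (Multiset.mem_cons_self _ _))) _ _ rfl hrF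
          (nestF_mid hnF (memF_cons hφF (fun χ h => hnF _ he' _ h))) hnd')
  by_cases hC9 : ∃ φ : Fml P S,
      (Fml.dia star φ ∈ root ∨ ∃ e ∈ nest, Fml.dia star φ ∈ e.2) ∧ φ ∉ root
  · obtain ⟨φ, hprin, hφ⟩ := hC9
    have hφF : φ ∈ F := hF.dia_sub (inseqF hprin)
    have hnd' : ¬ Deriv star Γ (φ ::ₘ root) nest := fun d => hnd (Deriv.diaStar hprin d)
    exact Refut_mono (fun χ h => Multiset.mem_cons_of_mem h) (Ext.refl nest)
      (IH _ (mu_root_lt (pot_lt hφF hφ (fun χ h => Multiset.mem_cons_of_mem h)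
        (Multiset.mem_cons_self _ _))) _ _ rfl (memF_cons hφF hrF) hnF hnd')
  -- saturated: build a countermodel
  have hcomp : ∀ (w : Option (Fin nest.length)) (φ : Fml P S), cmp root nest w φ →
      (φ ∈ root ∨ ∃ e ∈ nest, φ ∈ e.2) := by
    intro w φ h
    cases w with
    | none => exact Or.inl h
    | some i => exact Or.inr ⟨nest.get i, nest.get_mem i, h⟩
  apply countermodel star Γ hΓ root nest
  · intro w p ⟨h1, h2⟩
    apply hC1
    cases w with
    | none => exact ⟨p, Or.inl ⟨h1, h2⟩⟩
    | some i => exact ⟨p, Or.inr ⟨nest.get i, nest.get_mem i, h1, h2⟩⟩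
  · intro w φ ψ h
    by_contra hc
    cases w with
    | none => exact hC2 ⟨φ, ψ, h, hc⟩
    | some i => exact hC3 ⟨nest.get i, nest.get_mem i, φ, ψ, h, hc⟩
  · intro w φ ψ h
    by_contra hc
    push_neg at hc
    cases w with
    | none => exact hC4 ⟨φ, ψ, h, hc.1, hc.2⟩
    | some i => exact hC5 ⟨nest.get i, nest.get_mem i, φ, ψ, h, hc.1, hc.2⟩
  · intro w s φ h
    have hne : ¬¬∃ e ∈ nest, e.1 = s ∧ φ ∈ e.2 := fun hne => hC6 ⟨s, φ, hcomp w _ h, hne⟩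
    obtain ⟨e, he, hl, hm⟩ := not_not.1 hne
    obtain ⟨i, hi⟩ := List.mem_iff_get.1 he
    exact ⟨i, by rw [hi]; exact hl, by rw [hi]; exact hm⟩
  · intro s
    have hne : ¬¬∃ e ∈ nest, e.1 = s := fun hne => hC7 ⟨s, hne⟩
    obtain ⟨e, he, hl⟩ := not_not.1 hne
    obtain ⟨i, hi⟩ := List.mem_iff_get.1 he
    exact ⟨i, by rw [hi]; exact hl⟩
  · intro w s φ h i hrel
    by_contra hc
    exact hC8 ⟨s, φ, hcomp w _ h, nest.get i, nest.get_mem i, hrel, hc⟩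
  · intro w φ h
    by_contra hc
    exact hC9 ⟨φ, hcomp w _ h, hc⟩

end Stmt9Aux
/-- Completeness of `NS(V)` (with `S` finite): every valid nested sequent,
whose antecedent is a set of sharpening statements over `S ∖ {*}`,
is derivable. -/
theorem stmt9 {P S : Type} [Finite S] (star : S) (Γ : Set (S × S))
    (hΓ : ∀ q ∈ Γ, q.1 ≠ star ∧ q.2 ≠ star)
    (root : Multiset (Fml P S)) (nest : List (S × Multiset (Fml P S)))
    (h : ValidSeq star Γ root nest) :
    Deriv star Γ root nest := by
  classical
  by_contra hnd
  haveI : Fintype S := Fintype.ofFinite S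
  set base : Multiset (Fml P S) := root + (nest.map Prod.snd).sum with hbase
  let F : Finset (Fml P S) := base.toFinset.biUnion Stmt9Aux.scl
  have hmemF : ∀ φ ∈ base, φ ∈ F := fun φ hφ =>
    Finset.mem_biUnion.2 ⟨φ, Multiset.mem_toFinset.2 hφ, Stmt9Aux.mem_scl_self φ⟩
  have hF : Stmt9Aux.Closed F := by
    intro ψ hψ χ hχ
    obtain ⟨φ₀, hφ₀, hψ'⟩ := Finset.mem_biUnion.1 hψ
    exact Finset.mem_biUnion.2 ⟨φ₀, hφ₀, Stmt9Aux.scl_trans hψ' hχ⟩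
  have hrF : ∀ φ ∈ root, φ ∈ F := fun φ hφ => hmemF φ (Multiset.mem_add.2 (Or.inl hφ))
  have hnF : ∀ e ∈ nest, ∀ φ ∈ e.2, φ ∈ F := fun e he φ hφ =>
    hmemF φ (Multiset.mem_add.2 (Or.inr (Stmt9Aux.mem_map_sum he φ hφ)))
  have hΓ' : ∀ q ∈ Γ, q.1 ≠ star := fun q hq => (hΓ q hq).1
  obtain ⟨W, M, w, hw⟩ :=
    Stmt9Aux.main star Γ hΓ' F hF (Stmt9Aux.mu F root nest) root nest rfl hrF hnF hnd
  exact hw (h W M w)
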